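/- Let ψ : H → ℝ^m be Hadamard differentiable at f_{P,λ_0} with derivative ψ'_{f_{P,λ_0}} = (ψ'_{f_{P,λ_0},1},…,ψ'_{f_{P,λ_0},m}) ∈ H^m, and let Σ_P = Cov(g_{P,λ_0}(X_1,Y_1)). Assume that for P_X-almost every x ∈ X there exist y_1, y_2 ∈ supp(P(dy|x)) with L'(x,y_1,f_{P,λ_0}(x)) ≠ L'(x,y_2,f_{P,λ_0}(x)). Then Σ_P has full rank if and only if there is no a ∈ ℝ^m \ {0} such that aᵀψ'_{f_{P,λ_0}}(x) = Σ_j a_j ψ'_{f_{P,λ_0},j}(x) = 0 for P_X-almost every x ∈ X. -/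

import Mathlib

open MeasureTheory ProbabilityTheory Filter Topology
open scoped RealInnerProductSpace NNReal ENNReal BigOperators

noncomputable section

/-- The setting of the paper: a regularized kernel method for nonparametric
regression/classification.  `X ⊆ ℝ^d` closed and bounded, `Y ⊆ ℝ` closed, `k` the restriction of
an `r`-times continuously differentiable kernel with `r > d/2`, `H` its RKHS with canonical
feature map `Φ` (so `f(x) = ⟪f, Φ x⟫`), `P` an unknown probability distribution on `X × Y`,
`L` a convex `P`-square-integrable Nemitski loss of order `p` with continuous partial
derivatives `L'`, `L''` satisfying the envelope conditions, `fP lam` the unique minimizer of the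
`lam`-regularized risk, `fD n D lam` the unique minimizer of the `lam`-regularized empirical
risk for the data set `D`, and `Z 0, Z 1, …` an i.i.d. sequence with distribution `P` on a
probability space `(Ω, 𝓐, Q)`. -/
structure RegKernelSetting (d : ℕ) (H : Type) [NormedAddCommGroup H]
    [InnerProductSpace ℝ H] [CompleteSpace H] (Ω : Type) [MeasurableSpace Ω] where
  X : Set (EuclideanSpace ℝ (Fin d))
  Y : Set ℝ
  hXclosed : IsClosed X
  hXbdd : Bornology.IsBounded X
  hYclosed : IsClosed Y
  /-- differentiability order of the kernel -/
  r : ℕ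
  hr : (d : ℝ) / 2 < r
  /-- the kernel on `ℝ^d × ℝ^d`, whose restriction to `X × X` is the kernel `k` of the RKHS -/
  ktilde : EuclideanSpace ℝ (Fin d) → EuclideanSpace ℝ (Fin d) → ℝ
  hksmooth : ContDiff ℝ r (Function.uncurry ktilde)
  /-- `k ≠ 0` -/
  hkne : ∃ x x' : X, ktilde x x' ≠ 0
  /-- the canonical feature map of the RKHS `H` -/
  Φ : X → H
  /-- reproducing kernel: `k (x, x') = ⟪Φ x, Φ x'⟫` -/
  hfeature : ∀ x x' : X, ktilde x x' = ⟪Φ x, Φ x'⟫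
  /-- `H` is generated by the kernel `k` -/
  hgen : (Submodule.span ℝ (Set.range Φ)).topologicalClosure = ⊤
  P : Measure (X × Y)
  hP : IsProbabilityMeasure P
  /-- the loss function -/
  L : X → Y → ℝ → ℝ
  hLnonneg : ∀ x y t, 0 ≤ L x y t
  hLconvex : ∀ x y, ConvexOn ℝ Set.univ (L x y)
  /-- order of the Nemitski loss -/
  p : ℝ
  hp : 1 ≤ p
  b : X × Y → ℝ
  c : ℝ
  hc : 0 < c
  hbL2 : MemLp b 2 P
  /-- `L` is a `P`-square-integrable Nemitski loss of order `p` -/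
  hNemitski : ∀ x y t, L x y t ≤ b (x, y) + c * |t| ^ p
  /-- first partial derivative of the loss w.r.t. `t` -/
  L' : X → Y → ℝ → ℝ
  /-- second partial derivative of the loss w.r.t. `t` -/
  L'' : X → Y → ℝ → ℝ
  hL' : ∀ x y t, HasDerivAt (L x y) (L' x y t) t
  hL'' : ∀ x y t, HasDerivAt (L' x y) (L'' x y t) t
  hL'cont : Continuous fun q : (X × Y) × ℝ => L' q.1.1 q.1.2 q.2
  hL''cont : Continuous fun q : (X × Y) × ℝ => L'' q.1.1 q.1.2 q.2
  b' : ℝ → X × Y → ℝ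
  hb'L2 : ∀ a : ℝ, 0 < a → MemLp (b' a) 2 P
  hb'bound : ∀ a : ℝ, 0 < a → ∀ (x : X) (y : Y) (t : ℝ), |t| ≤ a → |L' x y t| ≤ b' a (x, y)
  b'' : ℝ → ℝ
  hb''bound : ∀ a : ℝ, 0 < a → ∀ (x : X) (y : Y) (t : ℝ), |t| ≤ a → |L'' x y t| ≤ b'' a
  /-- `fP lam` is the minimizer of the `lam`-regularized risk in `H` -/
  fP : ℝ → H
  hfPmin : ∀ lam : ℝ, 0 < lam → ∀ g : H,
      (∫ (z : X × Y), L z.1 z.2 ⟪fP lam, Φ z.1⟫ ∂P) + lam * ‖fP lam‖ ^ 2 ≤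
      (∫ (z : X × Y), L z.1 z.2 ⟪g, Φ z.1⟫ ∂P) + lam * ‖g‖ ^ 2
  hfPuniq : ∀ lam : ℝ, 0 < lam → ∀ g : H,
      (∫ (z : X × Y), L z.1 z.2 ⟪g, Φ z.1⟫ ∂P) + lam * ‖g‖ ^ 2 ≤
      (∫ (z : X × Y), L z.1 z.2 ⟪fP lam, Φ z.1⟫ ∂P) + lam * ‖fP lam‖ ^ 2 → g = fP lam
  /-- `fD n D lam` is the minimizer of the `lam`-regularized empirical risk for data `D` -/
  fD : (n : ℕ) → (Fin n → X × Y) → ℝ → H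
  hfDmin : ∀ (n : ℕ) (D : Fin n → X × Y) (lam : ℝ), 0 < lam → ∀ g : H,
      ((n : ℝ)⁻¹ * ∑ i, L (D i).1 (D i).2 ⟪fD n D lam, Φ (D i).1⟫) + lam * ‖fD n D lam‖ ^ 2 ≤
      ((n : ℝ)⁻¹ * ∑ i, L (D i).1 (D i).2 ⟪g, Φ (D i).1⟫) + lam * ‖g‖ ^ 2
  hfDuniq : ∀ (n : ℕ) (D : Fin n → X × Y) (lam : ℝ), 0 < lam → ∀ g : H,
      ((n : ℝ)⁻¹ * ∑ i, L (D i).1 (D i).2 ⟪g, Φ (D i).1⟫) + lam * ‖g‖ ^ 2 ≤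
      ((n : ℝ)⁻¹ * ∑ i, L (D i).1 (D i).2 ⟪fD n D lam, Φ (D i).1⟫) +
        lam * ‖fD n D lam‖ ^ 2 → g = fD n D lam
  Q : Measure Ω
  hQ : IsProbabilityMeasure Q
  /-- the i.i.d. data `(X_1,Y_1), (X_2,Y_2), …` -/
  Z : ℕ → Ω → X × Y
  hZmeas : ∀ i, Measurable (Z i)
  hZlaw : ∀ i, Measure.map (Z i) Q = P
  hZindep : iIndepFun (m := fun _ : ℕ => inferInstance) Z Q

variable {d : ℕ} {H : Type} [NormedAddCommGroup H] [InnerProductSpace ℝ H] [CompleteSpace H]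
  {Ω : Type} [MeasurableSpace Ω]

/-- the estimator `f_{D_n, Λ_n}` based on the first `n` data points and the (random)
regularization parameter `Λ_n` -/
def RegKernelSetting.fDhat (S : RegKernelSetting d H Ω) (Lam : ℕ → Ω → ℝ) (n : ℕ) (ω : Ω) : H :=
  S.fD n (fun i : Fin n => S.Z i ω) (Lam n ω)

/-- convergence in distribution (weak convergence) of a sequence of random elements to a
probability measure -/
def TendstoInDistribution {α : Type*} [TopologicalSpace α] [MeasurableSpace α]
    (Q : Measure Ω) (W : ℕ → Ω → α) (μ : Measure α) : Prop :=
  ∀ g : BoundedContinuousFunction α ℝ,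
    Tendsto (fun n => ∫ ω, g (W n ω) ∂Q) atTop (𝓝 (∫ x, g x ∂μ))

/-- `ψ : H → ℝ^m` is Hadamard differentiable at `f0` with derivative `ψ' ∈ H^m`. -/
def HadamardDiffAt {H : Type} [NormedAddCommGroup H] [InnerProductSpace ℝ H]
    {m : ℕ} (ψ : H → (Fin m → ℝ)) (f0 : H) (ψ' : Fin m → H) : Prop :=
  ∀ (t : ℕ → ℝ) (hs : ℕ → H) (h : H),
    (∀ ℓ, 0 < t ℓ) → Tendsto t atTop (𝓝 0) → Tendsto hs atTop (𝓝 h) →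
    Tendsto (fun ℓ => (t ℓ)⁻¹ • (ψ (f0 + t ℓ • hs ℓ) - ψ f0)) atTop
      (𝓝 fun j => ⟪ψ' j, h⟫)

/-- the covariance matrix `Cov(g(Z))` of an `ℝ^m`-valued random vector `g` under `P` -/
def covMatrix {α : Type*} [MeasurableSpace α] (P : Measure α) {m : ℕ}
    (g : α → Fin m → ℝ) : Matrix (Fin m) (Fin m) ℝ :=
  Matrix.of fun i j =>
    ∫ z, (g z i - ∫ z', g z' i ∂P) * (g z j - ∫ z', g z' j ∂P) ∂P


-- aux: L2*L2 integrable
private lemma integrable_mul_of_memL2 {α : Type*} [MeasurableSpace α] {μ : Measure α}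
    {f g : α → ℝ} (hf : MemLp f 2 μ) (hg : MemLp g 2 μ) :
    Integrable (fun x => f x * g x) μ := by
  have h := MeasureTheory.L2.integrable_inner (𝕜 := ℝ) (hf.toLp f) (hg.toLp g)
  refine h.congr ?_
  filter_upwards [hf.coeFn_toLp, hg.coeFn_toLp] with x h1 h2
  simp [h1, h2, RCLike.inner_apply, mul_comm]

-- aux: deriv of monotone is nonneg
private lemma nonneg_of_monotone_hasDerivAt {f : ℝ → ℝ} {f' t : ℝ}
    (hm : Monotone f) (hd : HasDerivAt f f' t) : 0 ≤ f' := by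
  have h := hasDerivAt_iff_tendsto_slope.mp hd
  have h2 : Filter.Tendsto (slope f t) (nhdsWithin t (Set.Ioi t)) (nhds f') :=
    h.mono_left (nhdsWithin_mono t fun x hx => ne_of_gt hx)
  refine ge_of_tendsto h2 ?_
  filter_upwards [self_mem_nhdsWithin] with x hx
  rw [slope_def_field]
  exact div_nonneg (sub_nonneg.mpr (hm (le_of_lt hx))) (sub_nonneg.mpr (le_of_lt hx))


private lemma null_of_lintegral_eq_measure {α : Type*} [MeasurableSpace α]
    (μ : Measure α) [IsFiniteMeasure μ] {D : Set α} (hD : MeasurableSet D)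
    {f : α → ℝ≥0∞} (hf1 : ∀ x, f x ≤ D.indicator 1 x)
    (hint : ∫⁻ x, f x ∂μ = μ D) :
    μ (D ∩ {x | f x < 1}) = 0 := by
  -- first: for every q < 1, the set with f ≤ q is null
  have key : ∀ q : ℝ≥0∞, q < 1 → μ (D ∩ {x | f x ≤ q}) = 0 := by
    intro q hq
    set δ := μ (D ∩ {x | f x ≤ q}) with hδdef
    by_contra hδ0
    have hδ0' : δ ≠ 0 := hδ0
    have hδle : δ ≤ μ D := measure_mono Set.inter_subset_left
    have hμDfin : μ D ≠ ∞ := measure_ne_top μ D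
    -- claim: every simple function below f satisfies the bound
    have claim : ∀ g : SimpleFunc α ℝ≥0∞, (⇑g ≤ f) →
        g.lintegral μ + (1 - q) * δ ≤ μ D := by
      intro g hg
      set M : Set α := {x | g x ≤ q} with hM
      have hMmeas : MeasurableSet M := g.measurable measurableSet_Iic
      have hgle : ∀ x, g x ≤ ((D ∩ M).indicator (fun _ => q) x
          + (D \ M).indicator 1 x) := by
        intro x
        by_cases hxD : x ∈ D
        · by_cases hxM : x ∈ M
          · have e1 : (D ∩ M).indicator (fun _ => q) x = q :=
              Set.indicator_of_mem (Set.mem_inter hxD hxM) _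
            have e2 : (D \ M).indicator (1 : α → ℝ≥0∞) x = 0 :=
              Set.indicator_of_notMem (fun h => h.2 hxM) _
            rw [e1, e2, add_zero]
            exact hxM
          · have e1 : (D ∩ M).indicator (fun _ => q) x = 0 :=
              Set.indicator_of_notMem (fun h => hxM h.2) _
            have e2 : (D \ M).indicator (1 : α → ℝ≥0∞) x = 1 :=
              Set.indicator_of_mem (Set.mem_diff_of_mem hxD hxM) _
            rw [e1, e2]
            calc g x ≤ f x := hg x
            _ ≤ D.indicator 1 x := hf1 x
            _ ≤ 1 := by by_cases h : x ∈ D <;> simp [h]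
            _ ≤ 0 + 1 := by simp
        · have h0 : f x ≤ 0 := by
            have := hf1 x
            rwa [Set.indicator_of_notMem hxD] at this
          have hg0 : g x = 0 := le_antisymm (le_trans (hg x) h0) (by simp)
          simp [hg0]
      have hle1 : g.lintegral μ ≤ q * μ (D ∩ M) + μ (D \ M) := by
        rw [← g.lintegral_eq_lintegral]
        calc ∫⁻ x, g x ∂μ
            ≤ ∫⁻ x, ((D ∩ M).indicator (fun _ => q) x + (D \ M).indicator 1 x) ∂μ :=
              lintegral_mono hgle
          _ = q * μ (D ∩ M) + μ (D \ M) := by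
              rw [lintegral_add_left ((measurable_const.indicator (hD.inter hMmeas)))]
              rw [lintegral_indicator_const (hD.inter hMmeas)]
              rw [lintegral_indicator (hD.diff hMmeas)]
              simp
      have hδM : δ ≤ μ (D ∩ M) := by
        refine measure_mono (Set.inter_subset_inter_right _ ?_)
        intro x hx
        exact le_trans (hg x) hx
      calc g.lintegral μ + (1 - q) * δ
          ≤ (q * μ (D ∩ M) + μ (D \ M)) + (1 - q) * μ (D ∩ M) := by
            refine add_le_add hle1 (mul_le_mul_right hδM _)
        _ = (q + (1 - q)) * μ (D ∩ M) + μ (D \ M) := by ring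
        _ = μ (D ∩ M) + μ (D \ M) := by
            rw [add_tsub_cancel_of_le hq.le]
            simp
        _ = μ D := measure_inter_add_diff D hMmeas
    -- now derive contradiction
    set ε := (1 - q) * δ with hε
    have hεpos : ε ≠ 0 := by
      simp only [hε, mul_ne_zero_iff]
      exact ⟨(tsub_pos_of_lt hq).ne', hδ0'⟩
    have hεle : ε ≤ μ D := by
      calc ε ≤ 1 * δ := mul_le_mul_left tsub_le_self _
      _ = δ := one_mul _
      _ ≤ μ D := hδle
    have hεfin : ε ≠ ∞ := fun h => hμDfin (top_le_iff.mp (h ▸ hεle))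
    -- μ D - ε < ∫⁻ f, so there is a simple function g ≤ f with large integral
    have hlt : μ D - ε < ∫⁻ x, f x ∂μ := by
      rw [hint]
      exact ENNReal.sub_lt_self hμDfin (fun h => hεpos (by simp [h] at hεle; exact hεle)) hεpos
    rw [MeasureTheory.lintegral] at hlt
    obtain ⟨g, hg⟩ := lt_iSup_iff.mp hlt
    by_cases hgf : (⇑g ≤ f)
    · simp only [hgf, iSup_pos] at hg
      have := claim g hgf
      have h2 : μ D < g.lintegral μ + ε :=
        (ENNReal.sub_lt_iff_lt_right hεfin hεle).mp hg
      exact absurd (lt_of_lt_of_le h2 this) (lt_irrefl _)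
    · simp [hgf] at hg
  -- cover {f < 1} by countably many {f ≤ q_n}
  have hcover : D ∩ {x | f x < 1} ⊆ ⋃ n : ℕ, D ∩ {x | f x ≤ 1 - ((n : ℝ≥0∞))⁻¹} := by
    rintro x ⟨hxD, hx⟩
    obtain ⟨n, hn⟩ := ENNReal.exists_inv_nat_lt (a := 1 - f x)
      (by simpa using (tsub_pos_of_lt hx).ne')
    refine Set.mem_iUnion.mpr ⟨n, hxD, ?_⟩
    have hfx1 : f x ≤ 1 := hx.le
    have hn0 : n ≠ 0 := by
      rintro rfl
      simp only [Nat.cast_zero, ENNReal.inv_zero] at hn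
      exact not_top_lt hn
    have h3 : f x + (n : ℝ≥0∞)⁻¹ < f x + (1 - f x) :=
      ENNReal.add_lt_add_left hx.ne_top hn
    rw [add_tsub_cancel_of_le hfx1] at h3
    exact ENNReal.le_sub_of_add_le_right (by simp [hn0]) h3.le
  refine measure_mono_null hcover ?_
  refine measure_iUnion_null fun n => ?_
  refine key _ ?_
  refine ENNReal.sub_lt_self (by simp) (by simp) (by simp)


private lemma matrix_rank_eq_card_iff {m : ℕ} (M : Matrix (Fin m) (Fin m) ℝ) :
    M.rank = m ↔ ∀ a : Fin m → ℝ, M.mulVec a = 0 → a = 0 := by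
  have hrn := LinearMap.finrank_range_add_finrank_ker M.mulVecLin
  have hdim : Module.finrank ℝ (Fin m → ℝ) = m := by simp
  rw [hdim] at hrn
  unfold Matrix.rank
  constructor
  · intro h a ha
    have hker0 : Module.finrank ℝ (LinearMap.ker M.mulVecLin) = 0 := by omega
    have hbot : LinearMap.ker M.mulVecLin = ⊥ := Submodule.finrank_eq_zero.mp hker0
    have hmem : a ∈ LinearMap.ker M.mulVecLin := by
      rw [LinearMap.mem_ker, Matrix.mulVecLin_apply, ha]
    rw [hbot] at hmem
    simpa using hmem
  · intro h
    have hbot : LinearMap.ker M.mulVecLin = ⊥ := by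
      rw [LinearMap.ker_eq_bot']
      intro a ha
      exact h a (by rwa [← Matrix.mulVecLin_apply])
    rw [hbot] at hrn
    simpa using hrn

private lemma hard_direction (S : RegKernelSetting d H Ω) (lam0 : ℝ)
    (condP : S.X → Measure S.Y) (hcond1 : ∀ x, IsProbabilityMeasure (condP x))
    (hcond2 : ∀ s : Set (S.X × S.Y), MeasurableSet s →
      S.P s = ∫⁻ x, condP x {y | (x, y) ∈ s} ∂S.P.fst)
    (hnondeg1 : ∀ᵐ x ∂S.P.fst, ∃ y₁ y₂ : S.Y,
      (∀ U : Set S.Y, IsOpen U → y₁ ∈ U → 0 < condP x U) ∧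
      (∀ U : Set S.Y, IsOpen U → y₂ ∈ U → 0 < condP x U) ∧
      S.L' x y₁ ⟪S.fP lam0, S.Φ x⟫ ≠ S.L' x y₂ ⟪S.fP lam0, S.Φ x⟫)
    (hΦ : Continuous S.Φ) (u : S.X → ℝ) (hu : Continuous u) (c : ℝ)
    (hae : ∀ᵐ z : S.X × S.Y ∂S.P,
      -(S.L' z.1 z.2 ⟪S.fP lam0, S.Φ z.1⟫) * u z.1 = c) :
    ∀ᵐ x ∂S.P.fst, u x = 0 := by
  haveI := S.hP
  set φ : S.X × S.Y → ℝ := fun z => -(S.L' z.1 z.2 ⟪S.fP lam0, S.Φ z.1⟫) * u z.1 with hφdef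
  have hφc : Continuous φ := by
    have h1 : Continuous (fun z : S.X × S.Y => S.L' z.1 z.2 ⟪S.fP lam0, S.Φ z.1⟫) :=
      S.hL'cont.comp (continuous_id.prodMk
        (continuous_const.inner (hΦ.comp continuous_fst)))
    exact h1.neg.mul (hu.comp continuous_fst)
  have hs0 : S.P {z | φ z ≠ c} = 0 := ae_iff.mp hae
  -- rational families
  set W : ℚ → ℚ → Set S.Y := fun q r => Subtype.val ⁻¹' Set.Ioo (q : ℝ) (r : ℝ) with hWdef
  set D : ℚ → ℚ → Set S.X :=
    fun q r => {x | ∀ y : S.Y, (y : ℝ) ∈ Set.Icc (q : ℝ) (r : ℝ) → φ (x, y) ≠ c} with hDdef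
  have hWopen : ∀ q r, IsOpen (W q r) := fun q r => isOpen_Ioo.preimage continuous_subtype_val
  have hDopen : ∀ q r, IsOpen (D q r) := by
    intro q r
    rw [isOpen_iff_forall_mem_open]
    intro x hx
    have hK : IsCompact {y : S.Y | (y : ℝ) ∈ Set.Icc (q : ℝ) (r : ℝ)} := by
      rw [Subtype.isCompact_iff]
      have himg : (Subtype.val '' {y : S.Y | (y : ℝ) ∈ Set.Icc (q : ℝ) (r : ℝ)})
          = S.Y ∩ Set.Icc (q : ℝ) (r : ℝ) := Subtype.image_preimage_coe _ _
      rw [himg]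
      exact isCompact_Icc.inter_left S.hYclosed
    have hUopen : IsOpen {p : S.X × S.Y | φ p ≠ c} :=
      isOpen_compl_singleton.preimage hφc
    have hsub : ({x} : Set S.X) ×ˢ {y : S.Y | (y : ℝ) ∈ Set.Icc (q : ℝ) (r : ℝ)}
        ⊆ {p : S.X × S.Y | φ p ≠ c} := by
      rintro ⟨x', y⟩ ⟨hx', hy⟩
      rcases hx' with rfl
      exact hx y hy
    obtain ⟨u', v, hu'o, hvo, hxu, hKv, huv⟩ :=
      generalized_tube_lemma isCompact_singleton hK hUopen hsub
    refine ⟨u', ?_, hu'o, hxu rfl⟩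
    intro x' hx' y hy
    exact huv (Set.mk_mem_prod hx' (hKv hy))
  -- the key null sets
  have hEnull : ∀ q r : ℚ, S.P.fst (D q r ∩ {x | 0 < condP x (W q r)}) = 0 := by
    intro q r
    have hDmeas : MeasurableSet (D q r) := (hDopen q r).measurableSet
    have hWmeas : MeasurableSet (W q r) := (hWopen q r).measurableSet
    have h1 : S.P (D q r ×ˢ W q r) = 0 := by
      refine measure_mono_null ?_ hs0
      rintro ⟨x, y⟩ ⟨hxD, hyW⟩
      exact hxD y (Set.Ioo_subset_Icc_self hyW)
    have hsetid : (Prod.fst ⁻¹' D q r) \ (D q r ×ˢ W q r) = D q r ×ˢ (W q r)ᶜ := by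
      ext z
      simp only [Set.mem_diff, Set.mem_preimage, Set.mem_prod, Set.mem_compl_iff]
      tauto
    have h2 : S.P (D q r ×ˢ (W q r)ᶜ) = S.P.fst (D q r) := by
      rw [← hsetid, measure_diff_null h1, Measure.fst_apply hDmeas]
    have h3 := hcond2 (D q r ×ˢ (W q r)ᶜ) (hDmeas.prod hWmeas.compl)
    rw [h2] at h3
    set f : S.X → ℝ≥0∞ := fun x => condP x {y | (x, y) ∈ D q r ×ˢ (W q r)ᶜ} with hfdef
    have hf1 : ∀ x, f x ≤ (D q r).indicator 1 x := by
      intro x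
      by_cases hxD : x ∈ D q r
      · rw [Set.indicator_of_mem hxD]
        haveI := hcond1 x
        exact prob_le_one
      · have hempty : {y : S.Y | (x, y) ∈ D q r ×ˢ (W q r)ᶜ} = ∅ := by
          ext y; simp [Set.mem_prod, hxD]
        simp only [hfdef, hempty, measure_empty, Set.indicator_of_notMem hxD]
        exact le_refl _
    have hnull := null_of_lintegral_eq_measure S.P.fst hDmeas hf1 h3.symm
    refine measure_mono_null ?_ hnull
    rintro x ⟨hxD, hxpos⟩
    refine ⟨hxD, ?_⟩
    have hfx : f x = condP x ((W q r)ᶜ) := by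
      have : {y : S.Y | (x, y) ∈ D q r ×ˢ (W q r)ᶜ} = (W q r)ᶜ := by
        ext y; simp [Set.mem_prod, hxD]
      simp only [hfdef, this]
    haveI := hcond1 x
    have : f x < 1 := by
      rw [hfx, prob_compl_eq_one_sub hWmeas]
      exact ENNReal.sub_lt_self ENNReal.one_ne_top one_ne_zero (ne_of_gt hxpos)
    exact this
  have hun : S.P.fst (⋃ q : ℚ, ⋃ r : ℚ, D q r ∩ {x | 0 < condP x (W q r)}) = 0 :=
    measure_iUnion_null fun q => measure_iUnion_null fun r => hEnull q r
  have hcompl : ∀ᵐ x ∂S.P.fst,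
      x ∉ ⋃ q : ℚ, ⋃ r : ℚ, D q r ∩ {x | 0 < condP x (W q r)} :=
    measure_eq_zero_iff_ae_notMem.mp hun
  filter_upwards [hnondeg1, hcompl] with x hnd hnin
  by_contra hux
  obtain ⟨y₁, y₂, hy₁, hy₂, hLne⟩ := hnd
  have hmain : ∃ y₀ : S.Y, (∀ U : Set S.Y, IsOpen U → y₀ ∈ U → 0 < condP x U)
      ∧ φ (x, y₀) ≠ c := by
    by_cases h1 : φ (x, y₁) ≠ c
    · exact ⟨y₁, hy₁, h1⟩
    · push_neg at h1
      refine ⟨y₂, hy₂, ?_⟩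
      intro h2
      apply hLne
      have heq : φ (x, y₁) = φ (x, y₂) := by rw [h1, h2]
      have heq2 : -(S.L' x y₁ ⟪S.fP lam0, S.Φ x⟫) * u x
          = -(S.L' x y₂ ⟪S.fP lam0, S.Φ x⟫) * u x := heq
      have := mul_right_cancel₀ hux heq2
      exact neg_injective this
  obtain ⟨y₀, hy₀pos, hy₀ne⟩ := hmain
  have hOopen : IsOpen {y : S.Y | φ (x, y) ≠ c} := by
    have : Continuous (fun y : S.Y => φ (x, y)) :=
      hφc.comp (continuous_const.prodMk continuous_id)
    exact isOpen_compl_singleton.preimage this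
  rw [isOpen_induced_iff] at hOopen
  obtain ⟨O', hO'open, hO'pre⟩ := hOopen
  have hy₀O' : (y₀ : ℝ) ∈ O' := by
    have : y₀ ∈ Subtype.val ⁻¹' O' := hO'pre ▸ hy₀ne
    exact this
  obtain ⟨ε, hε, hball⟩ := Metric.isOpen_iff.mp hO'open _ hy₀O'
  obtain ⟨q, hq1, hq2⟩ := exists_rat_btwn (show (y₀ : ℝ) - ε < (y₀ : ℝ) by linarith)
  obtain ⟨r, hr1, hr2⟩ := exists_rat_btwn (show (y₀ : ℝ) < (y₀ : ℝ) + ε by linarith)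
  have hxD : x ∈ D q r := by
    intro y hy
    have hyball : (y : ℝ) ∈ Metric.ball (y₀ : ℝ) ε := by
      rw [Metric.mem_ball, Real.dist_eq, abs_sub_lt_iff]
      rcases hy with ⟨hyl, hyr⟩
      constructor <;> linarith
    have : y ∈ Subtype.val ⁻¹' O' := hball hyball
    rw [hO'pre] at this
    exact this
  have hxW : 0 < condP x (W q r) := by
    refine hy₀pos _ (hWopen q r) ?_
    exact ⟨hq2, hr1⟩
  exact hnin (Set.mem_iUnion.mpr ⟨q, Set.mem_iUnion.mpr ⟨r, hxD, hxW⟩⟩)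

/-- Lemma: non-degeneracy of the asymptotic covariance matrix.
Assume that for `P_X`-a.e. `x` there are `y₁, y₂ ∈ supp P(dy|x)` with
`L'(x,y₁,f_{P,λ₀}(x)) ≠ L'(x,y₂,f_{P,λ₀}(x))`.  Then `Σ_P = Cov(g_{P,λ₀}(X₁,Y₁))` has full
rank if and only if there is no `a ∈ ℝ^m ∖ {0}` with `aᵀ ψ'_{f_{P,λ₀}} = 0` `P_X`-a.s. -/
theorem covariance_matrix_full_rank_iff
    (S : RegKernelSetting d H Ω) (lam0 : ℝ) (hlam0 : 0 < lam0)
    {m : ℕ} (ψ : H → (Fin m → ℝ)) (ψ' : Fin m → H)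
    (hψ : HadamardDiffAt ψ (S.fP lam0) ψ')
    (KP KPinv : H →L[ℝ] H)
    (hKP : ∀ f : H, KP f = (2 * lam0) • f +
      ∫ (z : S.X × S.Y), (S.L'' z.1 z.2 ⟪S.fP lam0, S.Φ z.1⟫ * ⟪f, S.Φ z.1⟫) • S.Φ z.1 ∂S.P)
    (hKPinv₁ : ∀ f : H, KPinv (KP f) = f) (hKPinv₂ : ∀ f : H, KP (KPinv f) = f)
    (condP : S.X → Measure S.Y) (hcond1 : ∀ x, IsProbabilityMeasure (condP x))
    (hcond2 : ∀ s : Set (S.X × S.Y), MeasurableSet s →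
      S.P s = ∫⁻ x, condP x {y | (x, y) ∈ s} ∂S.P.fst)
    (hnondeg1 : ∀ᵐ x ∂S.P.fst, ∃ y₁ y₂ : S.Y,
      (∀ U : Set S.Y, IsOpen U → y₁ ∈ U → 0 < condP x U) ∧
      (∀ U : Set S.Y, IsOpen U → y₂ ∈ U → 0 < condP x U) ∧
      S.L' x y₁ ⟪S.fP lam0, S.Φ x⟫ ≠ S.L' x y₂ ⟪S.fP lam0, S.Φ x⟫) :
    (covMatrix S.P (fun (z : S.X × S.Y) (j : Fin m) =>
        -(S.L' z.1 z.2 ⟪S.fP lam0, S.Φ z.1⟫) * ⟪ψ' j, KPinv (S.Φ z.1)⟫)).rank = m ↔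
      ¬ ∃ a : Fin m → ℝ, a ≠ 0 ∧ ∀ᵐ x ∂S.P.fst, ∑ j, a j * ⟪ψ' j, S.Φ x⟫ = 0 := by
  classical
  haveI := S.hP
  have hXcomp : IsCompact S.X := Metric.isCompact_of_isClosed_isBounded S.hXclosed S.hXbdd
  haveI : CompactSpace S.X := isCompact_iff_compactSpace.mp hXcomp
  -- continuity of the feature map
  have hΦ : Continuous S.Φ := by
    rw [continuous_iff_continuousAt]
    intro x
    have h0 : Continuous (Function.uncurry S.ktilde) := S.hksmooth.continuous
    have hkc : Continuous (fun x' : S.X =>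
        S.ktilde (x' : EuclideanSpace ℝ (Fin d)) (x' : EuclideanSpace ℝ (Fin d))
          - 2 * S.ktilde (x' : EuclideanSpace ℝ (Fin d)) (x : EuclideanSpace ℝ (Fin d))
          + S.ktilde (x : EuclideanSpace ℝ (Fin d)) (x : EuclideanSpace ℝ (Fin d))) := by
      have h1 : Continuous (fun x' : S.X =>
          S.ktilde (x' : EuclideanSpace ℝ (Fin d)) (x' : EuclideanSpace ℝ (Fin d))) :=
        h0.comp (continuous_subtype_val.prodMk continuous_subtype_val)
      have h2 : Continuous (fun x' : S.X =>
          S.ktilde (x' : EuclideanSpace ℝ (Fin d)) (x : EuclideanSpace ℝ (Fin d))) :=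
        h0.comp (continuous_subtype_val.prodMk continuous_const)
      exact (h1.sub (continuous_const.mul h2)).add continuous_const
    have hnorm : ∀ x' : S.X, Real.sqrt (S.ktilde (x' : EuclideanSpace ℝ (Fin d)) x'
        - 2 * S.ktilde (x' : EuclideanSpace ℝ (Fin d)) (x : EuclideanSpace ℝ (Fin d))
        + S.ktilde (x : EuclideanSpace ℝ (Fin d)) x) = dist (S.Φ x') (S.Φ x) := by
      intro x'
      rw [dist_eq_norm, ← Real.sqrt_sq (norm_nonneg (S.Φ x' - S.Φ x))]
      congr 1
      rw [← real_inner_self_eq_norm_sq, real_inner_sub_sub_self]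
      rw [S.hfeature x' x', S.hfeature x' x, S.hfeature x x]
    have hgx : S.ktilde (x : EuclideanSpace ℝ (Fin d)) x
        - 2 * S.ktilde (x : EuclideanSpace ℝ (Fin d)) (x : EuclideanSpace ℝ (Fin d))
        + S.ktilde (x : EuclideanSpace ℝ (Fin d)) x = 0 := by ring
    have ht : Filter.Tendsto (fun x' : S.X =>
        Real.sqrt (S.ktilde (x' : EuclideanSpace ℝ (Fin d)) x'
          - 2 * S.ktilde (x' : EuclideanSpace ℝ (Fin d)) (x : EuclideanSpace ℝ (Fin d))
          + S.ktilde (x : EuclideanSpace ℝ (Fin d)) x)) (𝓝 x) (𝓝 0) := by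
      have h3 := (Real.continuous_sqrt.comp hkc).tendsto x
      simpa [hgx, Function.comp_def] using h3
    rw [ContinuousAt, tendsto_iff_dist_tendsto_zero]
    exact ht.congr hnorm
  -- uniform bound for the feature map
  obtain ⟨C0, hC0⟩ : ∃ C, ∀ y ∈ Set.range (fun x : S.X => ‖S.Φ x‖), ‖y‖ ≤ C :=
    (isCompact_range (continuous_norm.comp hΦ)).isBounded.exists_norm_le
  set CΦ : ℝ := max C0 0 with hCΦdef
  have hCΦ : ∀ x : S.X, ‖S.Φ x‖ ≤ CΦ := by
    intro x
    have h1 := hC0 _ (Set.mem_range_self x)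
    rw [Real.norm_eq_abs] at h1
    exact le_trans ((le_abs_self _).trans h1) (le_max_left _ _)
  have hCΦ0 : (0:ℝ) ≤ CΦ := le_max_right _ _
  set F : S.X → ℝ := fun x => ⟪S.fP lam0, S.Φ x⟫ with hFdef
  have hFc : Continuous F := continuous_const.inner hΦ
  set a0 : ℝ := ‖S.fP lam0‖ * CΦ + 1 with ha0def
  have ha0 : 0 < a0 := by
    have h1 := mul_nonneg (norm_nonneg (S.fP lam0)) hCΦ0
    rw [ha0def]
    linarith
  have hFbd : ∀ x, |F x| ≤ a0 := by
    intro x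
    have h1 := abs_real_inner_le_norm (S.fP lam0) (S.Φ x)
    have h2 : ‖S.fP lam0‖ * ‖S.Φ x‖ ≤ ‖S.fP lam0‖ * CΦ :=
      mul_le_mul_of_nonneg_left (hCΦ x) (norm_nonneg _)
    rw [hFdef, ha0def]
    simp only []
    linarith
  have hL'c : Continuous (fun z : S.X × S.Y => S.L' z.1 z.2 (F z.1)) :=
    S.hL'cont.comp (continuous_id.prodMk (hFc.comp continuous_fst))
  set G : S.X × S.Y → Fin m → ℝ :=
    fun z j => -(S.L' z.1 z.2 (F z.1)) * ⟪ψ' j, KPinv (S.Φ z.1)⟫ with hGdef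
  set covM := covMatrix S.P G with hcovMdef
  have hKPinvΦ : Continuous fun x : S.X => KPinv (S.Φ x) := KPinv.continuous.comp hΦ
  have hGcont : ∀ j, Continuous (fun z => G z j) := by
    intro j
    rw [hGdef]
    exact (hL'c.neg).mul (continuous_const.inner (hKPinvΦ.comp continuous_fst))
  have hb'mem := S.hb'L2 a0 ha0
  have hb'pos : ∀ z : S.X × S.Y,
      |S.L' z.1 z.2 (F z.1)| ≤ S.b' a0 z ∧ 0 ≤ S.b' a0 z := by
    intro z
    have h := S.hb'bound a0 ha0 z.1 z.2 (F z.1) (hFbd z.1)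
    have h' : |S.L' z.1 z.2 (F z.1)| ≤ S.b' a0 z := by simpa using h
    exact ⟨h', le_trans (abs_nonneg _) h'⟩
  have hGmem : ∀ j, MemLp (fun z => G z j) 2 S.P := by
    intro j
    set Cj : ℝ := ‖ψ' j‖ * (‖KPinv‖ * CΦ) with hCjdef
    have hCj0 : 0 ≤ Cj := mul_nonneg (norm_nonneg _) (mul_nonneg (norm_nonneg _) hCΦ0)
    refine MemLp.of_le (hb'mem.const_mul Cj) (hGcont j).aestronglyMeasurable ?_
    refine Filter.Eventually.of_forall fun z => ?_
    have h1 := (hb'pos z).1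
    have h2 : |⟪ψ' j, KPinv (S.Φ z.1)⟫| ≤ Cj := by
      refine (abs_real_inner_le_norm _ _).trans ?_
      rw [hCjdef]
      refine mul_le_mul_of_nonneg_left ?_ (norm_nonneg _)
      refine (KPinv.le_opNorm _).trans ?_
      exact mul_le_mul_of_nonneg_left (hCΦ _) (norm_nonneg _)
    simp only [hGdef, Real.norm_eq_abs]
    rw [abs_mul, abs_neg]
    calc |S.L' z.1 z.2 (F z.1)| * |⟪ψ' j, KPinv (S.Φ z.1)⟫|
        ≤ S.b' a0 z * Cj := mul_le_mul h1 h2 (abs_nonneg _) (hb'pos z).2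
      _ = Cj * S.b' a0 z := mul_comm _ _
      _ ≤ |Cj * S.b' a0 z| := le_abs_self _
  have hL''nonneg : ∀ (x : S.X) (y : S.Y) (t : ℝ), 0 ≤ S.L'' x y t := by
    intro x y t
    have hmono : Monotone (S.L' x y) := by
      have h1 : MonotoneOn (deriv (S.L x y)) Set.univ :=
        (S.hLconvex x y).monotoneOn_deriv fun s _ => (S.hL' x y s).differentiableAt
      intro s t' hst
      have e1 : deriv (S.L x y) s = S.L' x y s := (S.hL' x y s).deriv
      have e2 : deriv (S.L x y) t' = S.L' x y t' := (S.hL' x y t').deriv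
      rw [← e1, ← e2]
      exact h1 (Set.mem_univ s) (Set.mem_univ t') hst
    exact nonneg_of_monotone_hasDerivAt hmono (S.hL'' x y t)
  have hIntK : ∀ f : H, Integrable (fun z : S.X × S.Y =>
      (S.L'' z.1 z.2 (F z.1) * ⟪f, S.Φ z.1⟫) • S.Φ z.1) S.P := by
    intro f
    have hc1 : Continuous (fun z : S.X × S.Y => S.L'' z.1 z.2 (F z.1)) :=
      S.hL''cont.comp (continuous_id.prodMk (hFc.comp continuous_fst))
    have hc2 : Continuous (fun z : S.X × S.Y => (⟪f, S.Φ z.1⟫ : ℝ)) :=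
      continuous_const.inner (hΦ.comp continuous_fst)
    have hcont : Continuous (fun z : S.X × S.Y =>
        (S.L'' z.1 z.2 (F z.1) * ⟪f, S.Φ z.1⟫) • S.Φ z.1) :=
      (hc1.mul hc2).smul (hΦ.comp continuous_fst)
    refine Integrable.mono' (integrable_const (S.b'' a0 * (‖f‖ * CΦ) * CΦ))
      hcont.aestronglyMeasurable ?_
    refine Filter.Eventually.of_forall fun z => ?_
    rw [norm_smul]
    have h1 : |S.L'' z.1 z.2 (F z.1)| ≤ S.b'' a0 := S.hb''bound a0 ha0 z.1 z.2 (F z.1) (hFbd z.1)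
    have h2 : |(⟪f, S.Φ z.1⟫ : ℝ)| ≤ ‖f‖ * CΦ :=
      (abs_real_inner_le_norm _ _).trans (mul_le_mul_of_nonneg_left (hCΦ _) (norm_nonneg _))
    have h3 : ‖S.L'' z.1 z.2 (F z.1) * (⟪f, S.Φ z.1⟫ : ℝ)‖ ≤ S.b'' a0 * (‖f‖ * CΦ) := by
      rw [Real.norm_eq_abs, abs_mul]
      exact mul_le_mul h1 h2 (abs_nonneg _) (le_trans (abs_nonneg _) h1)
    exact mul_le_mul h3 (hCΦ _) (norm_nonneg _) (le_trans (norm_nonneg _) h3)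
  have hKPsym : ∀ f g : H, ⟪KP f, g⟫ = ⟪f, KP g⟫ := by
    intro f g
    rw [hKP f, hKP g, inner_add_left, inner_add_right,
      real_inner_smul_left, real_inner_smul_right]
    congr 1
    have e1 : ⟪∫ z, (S.L'' z.1 z.2 (F z.1) * ⟪f, S.Φ z.1⟫) • S.Φ z.1 ∂S.P, g⟫
        = ∫ z, (S.L'' z.1 z.2 (F z.1) * ⟪f, S.Φ z.1⟫) * ⟪g, S.Φ z.1⟫ ∂S.P := by
      rw [real_inner_comm, ← integral_inner (hIntK f) g]
      congr 1
      funext z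
      rw [real_inner_smul_right]
    have e2 : (⟪f, ∫ z, (S.L'' z.1 z.2 (F z.1) * ⟪g, S.Φ z.1⟫) • S.Φ z.1 ∂S.P⟫ : ℝ)
        = ∫ z, (S.L'' z.1 z.2 (F z.1) * ⟪g, S.Φ z.1⟫) * ⟪f, S.Φ z.1⟫ ∂S.P := by
      rw [← integral_inner (hIntK g) f]
      congr 1
      funext z
      rw [real_inner_smul_right]
    rw [e1, e2]
    refine integral_congr_ae (Filter.Eventually.of_forall fun z => ?_)
    ring
  have hKPinvsym : ∀ f g : H, ⟪KPinv f, g⟫ = ⟪f, KPinv g⟫ := by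
    intro f g
    have h := hKPsym (KPinv f) (KPinv g)
    rw [hKPinv₂ f, hKPinv₂ g] at h
    exact h.symm
  have hfst : ∀ v : S.X → ℝ, Continuous v →
      ((∀ᵐ x ∂S.P.fst, v x = 0) ↔ (∀ᵐ z : S.X × S.Y ∂S.P, v z.1 = 0)) := by
    intro v hv
    have hmeas : MeasurableSet {x : S.X | ¬ v x = 0} :=
      hv.measurable (measurableSet_singleton 0).compl
    rw [MeasureTheory.ae_iff, MeasureTheory.ae_iff, Measure.fst_apply hmeas]
    exact Iff.rfl
  have key3 : ∀ w : H, (∀ᵐ x ∂S.P.fst, ⟪KPinv w, S.Φ x⟫ = 0) ↔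
      (∀ᵐ x ∂S.P.fst, ⟪w, S.Φ x⟫ = 0) := by
    intro w
    have hcontg : Continuous fun x : S.X => (⟪KPinv w, S.Φ x⟫ : ℝ) := continuous_const.inner hΦ
    have hcontw : Continuous fun x : S.X => (⟪w, S.Φ x⟫ : ℝ) := continuous_const.inner hΦ
    have hid : w = (2 * lam0) • KPinv w
        + ∫ z, (S.L'' z.1 z.2 (F z.1) * ⟪KPinv w, S.Φ z.1⟫) • S.Φ z.1 ∂S.P := by
      conv_lhs => rw [← hKPinv₂ w]
      rw [hKP (KPinv w)]
    constructor
    · intro hu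
      have huP : ∀ᵐ z : S.X × S.Y ∂S.P, (⟪KPinv w, S.Φ z.1⟫ : ℝ) = 0 := (hfst _ hcontg).mp hu
      have hzero : (∫ z, (S.L'' z.1 z.2 (F z.1) * ⟪KPinv w, S.Φ z.1⟫) • S.Φ z.1 ∂S.P) = 0 := by
        refine integral_eq_zero_of_ae ?_
        filter_upwards [huP] with z hz
        rw [hz, mul_zero, zero_smul]
        rfl
      have hw2 : w = (2 * lam0) • KPinv w := by
        conv_lhs => rw [hid]
        rw [hzero, add_zero]
      filter_upwards [hu] with x hx
      conv_lhs => rw [hw2]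
      rw [real_inner_smul_left, hx, mul_zero]
    · intro hw
      have hwP : ∀ᵐ z : S.X × S.Y ∂S.P, (⟪w, S.Φ z.1⟫ : ℝ) = 0 := (hfst _ hcontw).mp hw
      set v := ∫ z, (S.L'' z.1 z.2 (F z.1) * ⟪KPinv w, S.Φ z.1⟫) • S.Φ z.1 ∂S.P with hvdef
      have hptw : ∀ x : S.X, (⟪w, S.Φ x⟫ : ℝ) = 2 * lam0 * ⟪KPinv w, S.Φ x⟫ + ⟪v, S.Φ x⟫ := by
        intro x
        conv_lhs => rw [hid]
        rw [inner_add_left, real_inner_smul_left]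
      have hvΦ : ∀ᵐ z : S.X × S.Y ∂S.P,
          (⟪v, S.Φ z.1⟫ : ℝ) = -(2 * lam0 * ⟪KPinv w, S.Φ z.1⟫) := by
        filter_upwards [hwP] with z hz
        have h := hptw z.1
        rw [hz] at h
        linarith
      have hvv : (⟪v, v⟫ : ℝ)
          = ∫ z, (S.L'' z.1 z.2 (F z.1) * ⟪KPinv w, S.Φ z.1⟫) * ⟪v, S.Φ z.1⟫ ∂S.P := by
        nth_rewrite 2 [hvdef]
        rw [← integral_inner (hIntK (KPinv w)) v]
        congr 1
        funext z
        rw [real_inner_smul_right]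
      have hvv2 : (⟪v, v⟫ : ℝ) = (-(2 * lam0))
          * ∫ z, S.L'' z.1 z.2 (F z.1) * (⟪KPinv w, S.Φ z.1⟫ * ⟪KPinv w, S.Φ z.1⟫) ∂S.P := by
        rw [hvv, ← integral_const_mul]
        refine integral_congr_ae ?_
        filter_upwards [hvΦ] with z hz
        rw [hz]
        ring
      have hnn : 0 ≤ ∫ z, S.L'' z.1 z.2 (F z.1)
          * (⟪KPinv w, S.Φ z.1⟫ * ⟪KPinv w, S.Φ z.1⟫) ∂S.P :=
        integral_nonneg fun z => mul_nonneg (hL''nonneg _ _ _) (mul_self_nonneg _)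
      have hv0 : v = 0 := by
        refine real_inner_self_nonpos.mp ?_
        rw [hvv2]
        nlinarith [hnn]
      have huP : ∀ᵐ z : S.X × S.Y ∂S.P, (⟪KPinv w, S.Φ z.1⟫ : ℝ) = 0 := by
        filter_upwards [hwP] with z hz
        have h0 : 2 * lam0 * (⟪KPinv w, S.Φ z.1⟫ : ℝ) = 0 := by
          have h := hptw z.1
          rw [hz, hv0, inner_zero_left, add_zero] at h
          linarith
        rcases mul_eq_zero.mp h0 with h | h
        · exact absurd h (by positivity)
        · exact h
      exact (hfst _ hcontg).mpr huP
  -- the key equivalence, for every vector aa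
  have hkey : ∀ aa : Fin m → ℝ, covM.mulVec aa = 0 ↔
      (∀ᵐ x ∂S.P.fst, ∑ j, aa j * ⟪ψ' j, S.Φ x⟫ = 0) := by
    intro aa
    set μv : Fin m → ℝ := fun j => ∫ z, G z j ∂S.P with hμvdef
    set Fd : Fin m → S.X × S.Y → ℝ := fun j z => G z j - μv j with hFddef
    have hFdmem : ∀ j, MemLp (Fd j) 2 S.P := by
      intro j
      exact (hGmem j).sub (memLp_const (μv j))
    set T : S.X × S.Y → ℝ := fun z => ∑ j, aa j * Fd j z with hTdef
    have hTmem : MemLp T 2 S.P := by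
      have h1 : ∀ j ∈ Finset.univ, MemLp (fun z => aa j * Fd j z) 2 S.P :=
        fun j _ => (hFdmem j).const_mul (aa j)
      exact memLp_finset_sum Finset.univ h1
    have hTint : Integrable (fun z => T z * T z) S.P := integrable_mul_of_memL2 hTmem hTmem
    have hFdTint : ∀ i, Integrable (fun z => Fd i z * T z) S.P :=
      fun i => integrable_mul_of_memL2 (hFdmem i) hTmem
    have hcovij : ∀ i j, covM i j = ∫ z, Fd i z * Fd j z ∂S.P := fun i j => rfl
    have hmulVec : ∀ i, covM.mulVec aa i = ∫ z, Fd i z * T z ∂S.P := by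
      intro i
      have h0 : covM.mulVec aa i = ∑ j, covM i j * aa j := by
        simp [Matrix.mulVec, dotProduct]
      rw [h0]
      calc ∑ j, covM i j * aa j
          = ∑ j, ∫ z, (Fd i z * Fd j z) * aa j ∂S.P := by
            refine Finset.sum_congr rfl fun j _ => ?_
            rw [hcovij i j, ← integral_mul_const]
        _ = ∫ z, ∑ j, (Fd i z * Fd j z) * aa j ∂S.P := by
            refine (integral_finset_sum _ fun j _ => ?_).symm
            exact (integrable_mul_of_memL2 (hFdmem i) (hFdmem j)).mul_const (aa j)
        _ = ∫ z, Fd i z * T z ∂S.P := by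
            congr 1
            funext z
            simp only [hTdef]
            rw [Finset.mul_sum]
            refine Finset.sum_congr rfl fun j _ => by ring
    have hiff1 : covM.mulVec aa = 0 ↔ T =ᵐ[S.P] 0 := by
      constructor
      · intro h
        have hQ : ∫ z, T z * T z ∂S.P = 0 := by
          have hexp : ∫ z, T z * T z ∂S.P = ∑ i, aa i * ∫ z, Fd i z * T z ∂S.P := by
            calc ∫ z, T z * T z ∂S.P
                = ∫ z, ∑ i, aa i * (Fd i z * T z) ∂S.P := by
                  congr 1
                  funext z
                  nth_rewrite 1 [hTdef]
                  simp only []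
                  rw [Finset.sum_mul]
                  refine Finset.sum_congr rfl fun i _ => by ring
              _ = ∑ i, ∫ z, aa i * (Fd i z * T z) ∂S.P :=
                  integral_finset_sum _ fun i _ => (hFdTint i).const_mul (aa i)
              _ = ∑ i, aa i * ∫ z, Fd i z * T z ∂S.P := by
                  refine Finset.sum_congr rfl fun i _ => integral_const_mul _ _
          rw [hexp]
          refine Finset.sum_eq_zero fun i _ => ?_
          rw [← hmulVec i, h]
          simp
        have h2 := (integral_eq_zero_iff_of_nonneg_ae
          (Filter.Eventually.of_forall fun z => mul_self_nonneg (T z)) hTint).mp hQ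
        filter_upwards [h2] with z hz
        exact mul_self_eq_zero.mp hz
      · intro h
        funext i
        rw [Pi.zero_apply, hmulVec i]
        have he : (fun z => Fd i z * T z) =ᵐ[S.P] (fun _ => (0:ℝ)) := by
          filter_upwards [h] with z hz
          rw [Pi.zero_apply] at hz
          simp [hz]
        rw [integral_congr_ae he, integral_zero]
    set ha_ : H := ∑ j, aa j • ψ' j with hha
    have hinnersum : ∀ v : H, ∑ j, aa j * ⟪ψ' j, v⟫ = ⟪ha_, v⟫ := by
      intro v
      rw [hha, sum_inner]
      refine Finset.sum_congr rfl fun j _ => ?_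
      rw [real_inner_smul_left]
    have hSg : ∀ z : S.X × S.Y, (∑ j, aa j * G z j)
        = -(S.L' z.1 z.2 (F z.1)) * ⟪KPinv ha_, S.Φ z.1⟫ := by
      intro z
      have e1 : ∑ j, aa j * G z j
          = -(S.L' z.1 z.2 (F z.1)) * ∑ j, aa j * ⟪ψ' j, KPinv (S.Φ z.1)⟫ := by
        rw [Finset.mul_sum]
        refine Finset.sum_congr rfl fun j _ => ?_
        simp only [hGdef]
        ring
      rw [e1, hinnersum, ← hKPinvsym]
    set c₀ : ℝ := ∑ j, aa j * μv j with hc₀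
    have hTSg : ∀ z, T z = (∑ j, aa j * G z j) - c₀ := by
      intro z
      rw [hTdef, hc₀]
      simp only [hFddef]
      rw [← Finset.sum_sub_distrib]
      refine Finset.sum_congr rfl fun j _ => by ring
    have hucont : Continuous fun x : S.X => (⟪KPinv ha_, S.Φ x⟫ : ℝ) :=
      continuous_const.inner hΦ
    have hiff2 : (T =ᵐ[S.P] 0) ↔ (∀ᵐ x ∂S.P.fst, (⟪KPinv ha_, S.Φ x⟫ : ℝ) = 0) := by
      constructor
      · intro h
        refine hard_direction S lam0 condP hcond1 hcond2 hnondeg1 hΦ _ hucont c₀ ?_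
        filter_upwards [h] with z hz
        rw [Pi.zero_apply] at hz
        have h1 := hTSg z
        rw [hz] at h1
        rw [← hSg z]
        linarith
      · intro h
        have huP : ∀ᵐ z : S.X × S.Y ∂S.P, (⟪KPinv ha_, S.Φ z.1⟫ : ℝ) = 0 :=
          (hfst _ hucont).mp h
        have hSg0 : ∀ᵐ z : S.X × S.Y ∂S.P, (∑ j, aa j * G z j) = 0 := by
          filter_upwards [huP] with z hz
          rw [hSg z, hz, mul_zero]
        have hc₀0 : c₀ = 0 := by
          have hint : ∀ j ∈ Finset.univ, Integrable (fun z => aa j * G z j) S.P :=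
            fun j _ => ((hGmem j).integrable (by norm_num)).const_mul (aa j)
          have e : ∫ z, ∑ j, aa j * G z j ∂S.P = c₀ := by
            rw [integral_finset_sum _ hint, hc₀]
            refine Finset.sum_congr rfl fun j _ => ?_
            rw [integral_const_mul, hμvdef]
          rw [← e, integral_congr_ae (g := fun _ => (0:ℝ)) hSg0, integral_zero]
        filter_upwards [hSg0] with z hz
        rw [Pi.zero_apply]
        rw [hTSg z, hz, hc₀0, sub_zero]
    have hiff3 := key3 ha_
    have hiff4 : (∀ᵐ x ∂S.P.fst, (⟪ha_, S.Φ x⟫ : ℝ) = 0) ↔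
        (∀ᵐ x ∂S.P.fst, ∑ j, aa j * ⟪ψ' j, S.Φ x⟫ = 0) := by
      refine Filter.eventually_congr (Filter.Eventually.of_forall fun x => ?_)
      rw [hinnersum (S.Φ x)]
    exact ((hiff1.trans hiff2).trans hiff3).trans hiff4
  rw [matrix_rank_eq_card_iff]
  constructor
  · rintro hinj ⟨aa, ha0, haezero⟩
    exact ha0 (hinj aa ((hkey aa).mpr haezero))
  · intro hno aa hmv
    by_contra ha0
    exact hno ⟨aa, ha0, (hkey aa).mp hmv⟩
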